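/- arXiv:2110.12208 — 2 statements merged into one kernel-verified Lean document; each statement's English description precedes it below -/
import Mathlib

section
/- Let $M$ be a compact, geodesically convex set in $\mathbb{R}^d$ with reach $r_0 > 0$, and let $\varepsilon_n \to 0$ with $\tau_n = d_H(\mathcal{X}_n, M)/\varepsilon_n \to 0$ and $\varepsilon_n < 2 r_0$ for large $n$. Let $G_n$ be the graph on $\mathcal{X}_n$ with edges between points at Euclidean distance at most $\varepsilon_n$. Then for all $x, y \in M$ and $n$ large: $\left(1 - \frac{1}{24}\left(\frac{\pi \varepsilon_n}{2 r_0}\right)^2\right) d_M(x,y) \le d_{G_n}(x,y) \le (1 + 4\tau_n) d_M(x,y)$, where $d_{G_n}(x,y)$ includes $x, y$ as vertices of the graph. -/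
open Set Metric Filter

/-- Length-in-`ℝ≥0∞` geodesic (intrinsic) distance inside `M`. -/
noncomputable def geoDistE {d : ℕ} (M : Set (EuclideanSpace ℝ (Fin d)))
    (x y : EuclideanSpace ℝ (Fin d)) : ENNReal :=
  ⨅ (γ : ℝ → EuclideanSpace ℝ (Fin d)) (_ : ContinuousOn γ (Set.Icc 0 1))
    (_ : Set.MapsTo γ (Set.Icc 0 1) M) (_ : γ 0 = x) (_ : γ 1 = y),
    eVariationOn γ (Set.Icc 0 1)

/-- Geodesic (intrinsic) distance inside `M`, as a real number. -/
noncomputable def geoDist {d : ℕ} (M : Set (EuclideanSpace ℝ (Fin d)))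
    (x y : EuclideanSpace ℝ (Fin d)) : ℝ :=
  (geoDistE M x y).toReal

/-- Geodesic convexity: any two points of `M` are joined by a curve inside `M`
whose length equals the geodesic distance. -/
def GeodesicallyConvex {d : ℕ} (M : Set (EuclideanSpace ℝ (Fin d))) : Prop :=
  ∀ x ∈ M, ∀ y ∈ M, ∃ γ : ℝ → EuclideanSpace ℝ (Fin d),
    ContinuousOn γ (Set.Icc 0 1) ∧ Set.MapsTo γ (Set.Icc 0 1) M ∧
    γ 0 = x ∧ γ 1 = y ∧ eVariationOn γ (Set.Icc 0 1) = ENNReal.ofReal (geoDist M x y)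

section AuxLemmas
open Real

lemma sin_ge_sub_cube {s : ℝ} (hs : 0 ≤ s) : s - s^3/6 ≤ Real.sin s := by
  have key : ∀ t : ℝ, HasDerivAt (fun u => Real.sin u - u + u^3/6)
      (Real.cos t - 1 + t^2/2) t := by
    intro t
    have h1 := (Real.hasDerivAt_sin t).sub (hasDerivAt_id t)
    have h2 : HasDerivAt (fun u : ℝ => u^3/6) (t^2/2) t := by
      have := (hasDerivAt_pow 3 t).div_const 6
      refine this.congr_deriv ?_
      ring
    exact h1.add h2
  have mono : MonotoneOn (fun u => Real.sin u - u + u^3/6) (Set.Icc 0 s) := by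
    apply monotoneOn_of_deriv_nonneg (convex_Icc 0 s)
    · exact fun t _ => ((key t).continuousAt).continuousWithinAt
    · exact fun t _ => ((key t).differentiableAt).differentiableWithinAt
    · intro t ht
      rw [(key t).deriv]
      have := Real.one_sub_sq_div_two_le_cos (x := t)
      linarith
  rcases eq_or_lt_of_le hs with h | h
  · simp [← h]
  · have := mono (Set.left_mem_Icc.2 hs) (Set.right_mem_Icc.2 hs) hs
    simp only [Real.sin_zero] at this
    linarith

lemma arcsin_key {T t : ℝ} (hT1 : T ≤ 1) (ht0 : 0 ≤ t) (htT : t ≤ T) :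
    (1 - π^2/24 * T^2) * Real.arcsin t ≤ t := by
  have ht1 : t ≤ 1 := htT.trans hT1
  set s := Real.arcsin t with hsdef
  have hs0 : 0 ≤ s := Real.arcsin_nonneg.2 ht0
  have hs2 : s ≤ π/2 := Real.arcsin_le_pi_div_two t
  have hsin : Real.sin s = t := Real.sin_arcsin (by linarith) ht1
  have h1 : 2/π * s ≤ t := hsin ▸ Real.mul_le_sin hs0 hs2
  have hπ := Real.pi_pos
  have hsle : s ≤ π/2 * t := by
    rw [div_mul_eq_mul_div, div_le_iff₀ hπ] at h1
    nlinarith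
  have h2 : s - s^3/6 ≤ t := hsin ▸ _root_.sin_ge_sub_cube hs0
  have hsq : s^2 ≤ π^2/4 * T^2 := by
    have h3 : s*s ≤ (π/2*t)*(π/2*t) := mul_le_mul hsle hsle hs0 (by positivity)
    have h4 : t*t ≤ T*T := mul_le_mul htT htT ht0 (ht0.trans htT)
    nlinarith
  have h5 : 0 ≤ (π^2/4*T^2 - s^2) * s := mul_nonneg (by linarith) hs0
  nlinarith [h5]
variable {d : ℕ} {M : Set (EuclideanSpace ℝ (Fin d))} {x y : EuclideanSpace ℝ (Fin d)}

lemma geoDistE_le (γ : ℝ → EuclideanSpace ℝ (Fin d)) (h1 : ContinuousOn γ (Icc 0 1))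
    (h2 : MapsTo γ (Icc 0 1) M) (h3 : γ 0 = x) (h4 : γ 1 = y) :
    geoDistE M x y ≤ eVariationOn γ (Icc 0 1) :=
  iInf_le_of_le γ <| iInf_le_of_le h1 <| iInf_le_of_le h2 <| iInf_le_of_le h3 <|
    iInf_le_of_le h4 le_rfl

lemma geoDistE_ne_top (hMgeo : GeodesicallyConvex M) (hx : x ∈ M) (hy : y ∈ M) :
    geoDistE M x y ≠ ⊤ := by
  obtain ⟨γ, h1, h2, h3, h4, h5⟩ := hMgeo x hx y hy
  have hne : eVariationOn γ (Icc 0 1) ≠ ⊤ := by rw [h5]; exact ENNReal.ofReal_ne_top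
  exact ne_top_of_le_ne_top hne (geoDistE_le γ h1 h2 h3 h4)

lemma geoDistE_eq_ofReal (hMgeo : GeodesicallyConvex M) (hx : x ∈ M) (hy : y ∈ M) :
    geoDistE M x y = ENNReal.ofReal (geoDist M x y) :=
  (ENNReal.ofReal_toReal (geoDistE_ne_top hMgeo hx hy)).symm

lemma geoDist_nonneg : 0 ≤ geoDist M x y := ENNReal.toReal_nonneg

lemma edist_le_geoDistE : edist x y ≤ geoDistE M x y := by
  refine le_iInf fun γ => le_iInf fun h1 => le_iInf fun h2 => le_iInf fun h3 => le_iInf fun h4 => ?_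
  rw [← h3, ← h4]
  exact eVariationOn.edist_le γ ⟨le_rfl, zero_le_one⟩ ⟨zero_le_one, le_rfl⟩

lemma norm_le_geoDist (hMgeo : GeodesicallyConvex M) (hx : x ∈ M) (hy : y ∈ M) :
    ‖x - y‖ ≤ geoDist M x y := by
  have h := edist_le_geoDistE (M := M) (x := x) (y := y)
  have : ‖x - y‖ = (edist x y).toReal := by
    rw [edist_dist, ENNReal.toReal_ofReal dist_nonneg, dist_eq_norm]
  rw [this]
  exact ENNReal.toReal_mono (geoDistE_ne_top hMgeo hx hy) h

lemma geoDist_self (hx : x ∈ M) : geoDist M x x = 0 := by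
  have h : geoDistE M x x ≤ 0 := by
    have := geoDistE_le (M := M) (x := x) (y := x) (fun _ => x)
      continuousOn_const (fun t _ => hx) rfl rfl
    rwa [eVariationOn.constant_on (by simp [Set.Subsingleton])] at this
  simp [geoDist, le_zero_iff.1 h]

lemma continuousOn_union_closed {X Y : Type*} [TopologicalSpace X] [TopologicalSpace Y]
    {s t : Set X} {f : X → Y} (hs : IsClosed s) (ht : IsClosed t)
    (hfs : ContinuousOn f s) (hft : ContinuousOn f t) : ContinuousOn f (s ∪ t) := by
  intro x hx
  apply ContinuousWithinAt.union
  · rcases em (x ∈ s) with h | h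
    · exact hfs x h
    · exact continuousWithinAt_of_notMem_closure (by rwa [hs.closure_eq])
  · rcases em (x ∈ t) with h | h
    · exact hft x h
    · exact continuousWithinAt_of_notMem_closure (by rwa [ht.closure_eq])

lemma geoDist_triangle (hMgeo : GeodesicallyConvex M) {a b c : EuclideanSpace ℝ (Fin d)}
    (ha : a ∈ M) (hb : b ∈ M) (hc : c ∈ M) :
    geoDist M a c ≤ geoDist M a b + geoDist M b c := by
  obtain ⟨γ₁, c1, m1, s1, e1, v1⟩ := hMgeo a ha b hb
  obtain ⟨γ₂, c2, m2, s2, e2, v2⟩ := hMgeo b hb c hc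
  classical
  set γ : ℝ → EuclideanSpace ℝ (Fin d) :=
    fun t => if t ≤ 1/2 then γ₁ (2*t) else γ₂ (2*t - 1) with hγ
  have e12 : γ₁ 1 = γ₂ 0 := by rw [e1, s2]
  have eq1 : EqOn γ (fun t => γ₁ (2*t)) (Icc 0 (1/2)) := fun t ht => by
    simp only [hγ]; rw [if_pos ht.2]
  have eq2 : EqOn γ (fun t => γ₂ (2*t - 1)) (Icc (1/2) 1) := fun t ht => by
    simp only [hγ]
    rcases lt_or_eq_of_le ht.1 with h | h
    · rw [if_neg (not_le.2 h)]
    · rw [← h]; norm_num [e12]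
  have mφ1 : MapsTo (fun t : ℝ => 2*t) (Icc (0:ℝ) (1/2)) (Icc (0:ℝ) 1) := fun t ht => by
    simp only [mem_Icc] at ht ⊢; exact ⟨by linarith [ht.1], by linarith [ht.2]⟩
  have mφ2 : MapsTo (fun t : ℝ => 2*t - 1) (Icc (1/2:ℝ) 1) (Icc (0:ℝ) 1) := fun t ht => by
    simp only [mem_Icc] at ht ⊢; exact ⟨by linarith [ht.1], by linarith [ht.2]⟩
  have c1' : ContinuousOn (fun t : ℝ => γ₁ (2*t)) (Icc 0 (1/2)) :=
    c1.comp (by fun_prop) mφ1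
  have c2' : ContinuousOn (fun t : ℝ => γ₂ (2*t - 1)) (Icc (1/2) 1) :=
    c2.comp (by fun_prop) mφ2
  have hcont : ContinuousOn γ (Icc 0 1) := by
    rw [← Icc_union_Icc_eq_Icc (by norm_num : (0:ℝ) ≤ 1/2) (by norm_num : (1/2:ℝ) ≤ 1)]
    exact continuousOn_union_closed isClosed_Icc isClosed_Icc (c1'.congr eq1) (c2'.congr eq2)
  have hmaps : MapsTo γ (Icc 0 1) M := fun t ht => by
    by_cases h : t ≤ 1/2
    · rw [eq1 ⟨ht.1, h⟩]; exact m1 (mφ1 ⟨ht.1, h⟩)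
    · rw [eq2 ⟨le_of_not_ge h, ht.2⟩]; exact m2 (mφ2 ⟨le_of_not_ge h, ht.2⟩)
  have hstart : γ 0 = a := by
    rw [eq1 ⟨le_rfl, by norm_num⟩]; show γ₁ (2*0) = a; rw [mul_zero, s1]
  have hend : γ 1 = c := by
    rw [eq2 ⟨by norm_num, le_rfl⟩]; show γ₂ (2*1 - 1) = c; norm_num [e2]
  have himg1 : (fun t : ℝ => 2*t) '' Icc 0 (1/2) = Icc 0 1 := by
    have h := image_mul_left_Icc' (two_pos) (0:ℝ) (1/2)
    norm_num at h
    exact h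
  have himg2 : (fun t : ℝ => 2*t - 1) '' Icc (1/2) 1 = Icc 0 1 := by
    have h := image_affine_Icc' (two_pos) (-1:ℝ) (1/2) 1
    rw [show (2*(1/2:ℝ)+-1) = 0 by norm_num, show (2*(1:ℝ)+-1) = 1 by norm_num] at h
    rw [show (fun t : ℝ => 2*t - 1) = (fun t : ℝ => 2*t + -1) from funext fun t => by ring]
    exact h
  have hv1 : eVariationOn γ (Icc 0 (1/2)) = ENNReal.ofReal (geoDist M a b) := by
    rw [eVariationOn.eq_of_eqOn eq1]
    have hmono : MonotoneOn (fun t : ℝ => 2*t) (Icc (0:ℝ) (1/2)) :=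
      fun u _ v _ huv => by dsimp; linarith
    rw [show (fun t : ℝ => γ₁ (2*t)) = γ₁ ∘ (fun t : ℝ => 2*t) from rfl,
      eVariationOn.comp_eq_of_monotoneOn γ₁ _ hmono, himg1, v1]
  have hv2 : eVariationOn γ (Icc (1/2) 1) = ENNReal.ofReal (geoDist M b c) := by
    rw [eVariationOn.eq_of_eqOn eq2]
    have hmono : MonotoneOn (fun t : ℝ => 2*t - 1) (Icc (1/2:ℝ) 1) :=
      fun u _ v _ huv => by dsimp; linarith
    rw [show (fun t : ℝ => γ₂ (2*t - 1)) = γ₂ ∘ (fun t : ℝ => 2*t - 1) from rfl,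
      eVariationOn.comp_eq_of_monotoneOn γ₂ _ hmono, himg2, v2]
  have hsplit : eVariationOn γ (Icc 0 1) =
      eVariationOn γ (Icc 0 (1/2)) + eVariationOn γ (Icc (1/2) 1) := by
    have h := eVariationOn.Icc_add_Icc γ (s := Icc (0:ℝ) 1) (a := 0) (b := 1/2) (c := 1)
      (by norm_num) (by norm_num) (by norm_num)
    rw [inter_eq_self_of_subset_right (Icc_subset_Icc le_rfl (by norm_num)),
      inter_eq_self_of_subset_right (Icc_subset_Icc (by norm_num) le_rfl),
      inter_self] at h
    exact h.symm
  have hle : geoDistE M a c ≤ ENNReal.ofReal (geoDist M a b + geoDist M b c) := by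
    rw [ENNReal.ofReal_add geoDist_nonneg geoDist_nonneg]
    calc geoDistE M a c ≤ eVariationOn γ (Icc 0 1) := geoDistE_le γ hcont hmaps hstart hend
    _ = _ := by rw [hsplit, hv1, hv2]
  exact ENNReal.toReal_le_of_le_ofReal (add_nonneg geoDist_nonneg geoDist_nonneg) hle

lemma upper_bound_aux {d : ℕ} {M : Set (EuclideanSpace ℝ (Fin d))}
    (hMgeo : GeodesicallyConvex M) {x y : EuclideanSpace ℝ (Fin d)}
    (hx : x ∈ M) (hy : y ∈ M) {V' : Set (EuclideanSpace ℝ (Fin d))}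
    {ε δ : ℝ} (hε : 0 < ε) (hδ0 : 0 ≤ δ) (hδε : 4*δ ≤ ε)
    (hsample : ∀ a ∈ M, ∃ z ∈ V', ‖z - a‖ ≤ δ) :
    ∃ (p : ℕ) (w : ℕ → EuclideanSpace ℝ (Fin d)),
      w 0 = x ∧ w p = y ∧ (∀ i ≤ p, w i ∈ V' ∪ {x, y}) ∧
      (∀ i < p, ‖w i - w (i+1)‖ ≤ ε) ∧
      ∑ i ∈ Finset.range p, ‖w (i+1) - w i‖ ≤ (1 + 4*(δ/ε)) * geoDist M x y := by
  obtain ⟨γ, hγc, hγm, hγ0, hγ1, hγv⟩ := hMgeo x hx y hy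
  obtain ⟨ℓ, hℓ⟩ : ∃ L : ℝ, L = geoDist M x y := ⟨_, rfl⟩
  rw [← hℓ] at hγv ⊢
  have hℓ0 : 0 ≤ ℓ := hℓ ▸ geoDist_nonneg
  obtain ⟨η, hη⟩ : ∃ e : ℝ, e = ε - 2*δ := ⟨_, rfl⟩
  have hη0 : 0 < η := by rw [hη]; linarith
  classical
  have step : ∀ s, s ∈ Icc (0:ℝ) 1 → ¬ (‖γ 1 - γ s‖ ≤ η) →
      ∃ s', s' ∈ Ioc s 1 ∧ ‖γ s' - γ s‖ = η := by
    intro s hs hns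
    have hs1 : s ≤ 1 := hs.2
    have hcont : ContinuousOn (fun u => ‖γ u - γ s‖) (Icc s 1) :=
      ((hγc.mono (Icc_subset_Icc hs.1 le_rfl)).sub continuousOn_const).norm
    have hmem : η ∈ Icc (‖γ s - γ s‖) (‖γ 1 - γ s‖) := by
      constructor
      · rw [sub_self, norm_zero]; exact hη0.le
      · exact (not_le.1 hns).le
    obtain ⟨s', hs', hval⟩ := intermediate_value_Icc hs1 hcont hmem
    refine ⟨s', ⟨lt_of_le_of_ne hs'.1 ?_, hs'.2⟩, hval⟩
    intro hcontra
    rw [← hcontra] at hval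
    simp only [sub_self, norm_zero] at hval
    exact hη0.ne hval
  obtain ⟨F, hFgood, hFbad⟩ : ∃ F : ℝ → ℝ,
      (∀ s, s ∈ Icc (0:ℝ) 1 → ¬ (‖γ 1 - γ s‖ ≤ η) →
        F s ∈ Ioc s 1 ∧ ‖γ (F s) - γ s‖ = η) ∧
      (∀ s, ¬ (s ∈ Icc (0:ℝ) 1 ∧ ¬ (‖γ 1 - γ s‖ ≤ η)) → F s = s) := by
    refine ⟨fun s => if h : s ∈ Icc (0:ℝ) 1 ∧ ¬ (‖γ 1 - γ s‖ ≤ η)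
      then (step s h.1 h.2).choose else s, ?_, ?_⟩
    · intro s hs hns
      dsimp only
      rw [dif_pos (show s ∈ Icc (0:ℝ) 1 ∧ ¬ (‖γ 1 - γ s‖ ≤ η) from ⟨hs, hns⟩)]
      exact (step s hs hns).choose_spec
    · intro s hs
      dsimp only
      rw [dif_neg hs]
  set T : ℕ → ℝ := fun i => F^[i] 0 with hTdef
  have hT0 : T 0 = 0 := rfl
  have hTsucc : ∀ i, T (i+1) = F (T i) := fun i => Function.iterate_succ_apply' F i 0
  have hTmem : ∀ i, T i ∈ Icc (0:ℝ) 1 := by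
    intro i; induction i with
    | zero => exact ⟨le_rfl, zero_le_one⟩
    | succ j ih =>
      rw [hTsucc j]
      by_cases h : T j ∈ Icc (0:ℝ) 1 ∧ ¬ (‖γ 1 - γ (T j)‖ ≤ η)
      · have hspec := hFgood (T j) h.1 h.2
        exact ⟨ih.1.trans hspec.1.1.le, hspec.1.2⟩
      · rw [hFbad (T j) h]; exact ih
  have hTmono : Monotone T := by
    apply monotone_nat_of_le_succ
    intro i
    rw [hTsucc i]
    by_cases h : T i ∈ Icc (0:ℝ) 1 ∧ ¬ (‖γ 1 - γ (T i)‖ ≤ η)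
    · exact (hFgood (T i) h.1 h.2).1.1.le
    · rw [hFbad (T i) h]
  have hTstep : ∀ i, ¬ (‖γ 1 - γ (T i)‖ ≤ η) → ‖γ (T (i+1)) - γ (T i)‖ = η := by
    intro i hi
    rw [hTsucc i]
    exact (hFgood (T i) (hTmem i) hi).2
  have hvar : ∀ (m : ℕ) (u : ℕ → ℝ), Monotone u → (∀ i, u i ∈ Icc (0:ℝ) 1) →
      ∑ i ∈ Finset.range m, ‖γ (u (i+1)) - γ (u i)‖ ≤ ℓ := by
    intro m u hmono hmem
    have h := eVariationOn.sum_le (f := γ) (n := m) hmono hmem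
    rw [hγv] at h
    have heq : ∑ i ∈ Finset.range m, edist (γ (u (i+1))) (γ (u i)) =
        ENNReal.ofReal (∑ i ∈ Finset.range m, ‖γ (u (i+1)) - γ (u i)‖) := by
      rw [ENNReal.ofReal_sum_of_nonneg (fun i _ => norm_nonneg _)]
      exact Finset.sum_congr rfl fun i _ => by rw [edist_dist, dist_eq_norm]
    rw [heq] at h
    exact (ENNReal.ofReal_le_ofReal_iff hℓ0).1 h
  have hstop : ∃ i, ‖γ 1 - γ (T i)‖ ≤ η := by
    by_contra hno
    push_neg at hno
    obtain ⟨m, hm⟩ := exists_nat_gt (ℓ / η)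
    have h1 := hvar m T hTmono hTmem
    have h2 : ∀ i ∈ Finset.range m, ‖γ (T (i+1)) - γ (T i)‖ = η :=
      fun i _ => hTstep i (not_le.2 (hno i))
    rw [Finset.sum_congr rfl h2, Finset.sum_const, Finset.card_range, nsmul_eq_mul] at h1
    rw [div_lt_iff₀ hη0] at hm
    linarith
  obtain ⟨p, hstopp, hnostop⟩ : ∃ p : ℕ, ‖γ 1 - γ (T p)‖ ≤ η ∧
      ∀ i < p, ¬ (‖γ 1 - γ (T i)‖ ≤ η) :=
    ⟨Nat.find hstop, Nat.find_spec hstop, fun i hi => Nat.find_min hstop hi⟩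
  have hzex : ∀ i : ℕ, ∃ zz ∈ V', ‖zz - γ (T i)‖ ≤ δ := fun i => hsample _ (hγm (hTmem i))
  choose z hzV hzd using hzex
  set u : ℕ → ℝ := fun i => if i ≤ p then T i else 1 with hu
  set w : ℕ → EuclideanSpace ℝ (Fin d) :=
    fun i => if i = 0 then x else if i ≤ p then z i else y with hwdef
  have hw0 : w 0 = x := rfl
  have hwlast : w (p+1) = y := by
    simp only [hwdef, if_neg (Nat.succ_ne_zero p), if_neg (Nat.not_succ_le_self p)]
  have humono : Monotone u := by
    apply monotone_nat_of_le_succ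
    intro i
    by_cases h1 : i + 1 ≤ p
    · simp only [hu, if_pos (Nat.le_of_succ_le h1), if_pos h1]
      exact hTmono (Nat.le_succ i)
    · by_cases h2 : i ≤ p
      · simp only [hu, if_pos h2, if_neg h1]; exact (hTmem i).2
      · simp only [hu, if_neg h1, if_neg h2]
        exact le_rfl
  have humem : ∀ i, u i ∈ Icc (0:ℝ) 1 := fun i => by
    by_cases h : i ≤ p
    · simp only [hu, if_pos h]; exact hTmem i
    · simp only [hu, if_neg h]; exact ⟨zero_le_one, le_rfl⟩
  have hu0 : u 0 = 0 := by simp only [hu, if_pos (Nat.zero_le p), hT0]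
  have hγu0 : γ (u 0) = x := by rw [hu0, hγ0]
  have hγulast : γ (u (p+1)) = y := by
    simp only [hu, if_neg (Nat.not_succ_le_self p)]; exact hγ1
  have herr0 : ‖w 0 - γ (u 0)‖ = 0 := by rw [hw0, hγu0, sub_self, norm_zero]
  have herrlast : ‖w (p+1) - γ (u (p+1))‖ = 0 := by rw [hwlast, hγulast, sub_self, norm_zero]
  have herr : ∀ i ≤ p + 1, ‖w i - γ (u i)‖ ≤ δ := by
    intro i hi
    rcases Nat.eq_zero_or_pos i with h0 | h0
    · subst h0; rw [herr0]; exact hδ0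
    by_cases h : i ≤ p
    · simp only [hwdef, hu, if_neg (Nat.pos_iff_ne_zero.1 h0), if_pos h]
      exact hzd i
    · have hip : i = p + 1 := le_antisymm hi (Nat.succ_le_of_lt (not_le.1 h))
      subst hip
      rw [herrlast]; exact hδ0
  have hchordlt : ∀ i < p, ‖γ (u (i+1)) - γ (u i)‖ = η := by
    intro i hi
    simp only [hu, if_pos hi.le, if_pos (Nat.succ_le_of_lt hi)]
    exact hTstep i (hnostop i hi)
  have hchordp : ‖γ (u (p+1)) - γ (u p)‖ ≤ η := by
    simp only [hu, if_neg (Nat.not_succ_le_self p), if_pos le_rfl]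
    exact hstopp
  have hchord : ∀ i ≤ p, ‖γ (u (i+1)) - γ (u i)‖ ≤ η := by
    intro i hi
    rcases lt_or_eq_of_le hi with h | h
    · exact (hchordlt i h).le
    · subst h; exact hchordp
  have hchordsum : ∑ i ∈ Finset.range (p+1), ‖γ (u (i+1)) - γ (u i)‖ ≤ ℓ :=
    hvar (p+1) u humono humem
  have hpη : (p : ℝ) * η ≤ ℓ := by
    have h := hvar p u humono humem
    have h2 : ∀ i ∈ Finset.range p, ‖γ (u (i+1)) - γ (u i)‖ = η :=
      fun i hi => hchordlt i (Finset.mem_range.1 hi)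
    rw [Finset.sum_congr rfl h2, Finset.sum_const, Finset.card_range, nsmul_eq_mul] at h
    exact h
  have hseg : ∀ i, ‖w (i+1) - w i‖ ≤
      ‖γ (u (i+1)) - γ (u i)‖ + ‖w i - γ (u i)‖ + ‖w (i+1) - γ (u (i+1))‖ := by
    intro i
    have hexp : w (i+1) - w i =
        (w (i+1) - γ (u (i+1))) + (γ (u (i+1)) - γ (u i)) - (w i - γ (u i)) := by abel
    rw [hexp]
    calc ‖(w (i+1) - γ (u (i+1))) + (γ (u (i+1)) - γ (u i)) - (w i - γ (u i))‖
        ≤ ‖(w (i+1) - γ (u (i+1))) + (γ (u (i+1)) - γ (u i))‖ + ‖w i - γ (u i)‖ :=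
          norm_sub_le _ _
    _ ≤ ‖w (i+1) - γ (u (i+1))‖ + ‖γ (u (i+1)) - γ (u i)‖ + ‖w i - γ (u i)‖ := by
        gcongr
        exact norm_add_le _ _
    _ = _ := by ring
  have hedge : ∀ i < p + 1, ‖w i - w (i+1)‖ ≤ ε := by
    intro i hi
    have hi' : i ≤ p := Nat.lt_succ_iff.1 hi
    rw [norm_sub_rev]
    calc ‖w (i+1) - w i‖
        ≤ ‖γ (u (i+1)) - γ (u i)‖ + ‖w i - γ (u i)‖ + ‖w (i+1) - γ (u (i+1))‖ := hseg i
    _ ≤ η + δ + δ := by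
        gcongr
        exacts [hchord i hi', herr i (hi'.trans (Nat.le_succ p)), herr (i+1) (Nat.succ_le_succ hi')]
    _ ≤ ε := by rw [hη]; linarith
  have hsum : ∑ i ∈ Finset.range (p+1), ‖w (i+1) - w i‖ ≤ ℓ + 2*δ*p := by
    have hb1 : ∑ i ∈ Finset.range (p+1), ‖w i - γ (u i)‖ ≤ δ * p := by
      rw [Finset.sum_range_succ', herr0, add_zero]
      calc ∑ i ∈ Finset.range p, ‖w (i+1) - γ (u (i+1))‖ ≤ ∑ _i ∈ Finset.range p, δ :=
        Finset.sum_le_sum fun i hi =>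
          herr (i+1) (Nat.succ_le_succ (Finset.mem_range.1 hi).le)
      _ = δ * p := by rw [Finset.sum_const, Finset.card_range, nsmul_eq_mul]; ring
    have hb2 : ∑ i ∈ Finset.range (p+1), ‖w (i+1) - γ (u (i+1))‖ ≤ δ * p := by
      rw [Finset.sum_range_succ, herrlast, add_zero]
      calc ∑ i ∈ Finset.range p, ‖w (i+1) - γ (u (i+1))‖ ≤ ∑ _i ∈ Finset.range p, δ :=
        Finset.sum_le_sum fun i hi =>
          herr (i+1) (Nat.succ_le_succ (Finset.mem_range.1 hi).le)
      _ = δ * p := by rw [Finset.sum_const, Finset.card_range, nsmul_eq_mul]; ring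
    calc ∑ i ∈ Finset.range (p+1), ‖w (i+1) - w i‖
        ≤ ∑ i ∈ Finset.range (p+1),
          (‖γ (u (i+1)) - γ (u i)‖ + ‖w i - γ (u i)‖ + ‖w (i+1) - γ (u (i+1))‖) :=
          Finset.sum_le_sum fun i _ => hseg i
    _ = (∑ i ∈ Finset.range (p+1), ‖γ (u (i+1)) - γ (u i)‖)
        + (∑ i ∈ Finset.range (p+1), ‖w i - γ (u i)‖)
        + (∑ i ∈ Finset.range (p+1), ‖w (i+1) - γ (u (i+1))‖) := by
          rw [← Finset.sum_add_distrib, ← Finset.sum_add_distrib]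
    _ ≤ ℓ + δ*p + δ*p := add_le_add (add_le_add hchordsum hb1) hb2
    _ = ℓ + 2*δ*p := by ring
  have hfinal : ℓ + 2*δ*p ≤ (1 + 4*(δ/ε)) * ℓ := by
    have h1 : 2*δ*((p:ℝ)*η) ≤ 2*δ*ℓ := by nlinarith [hpη]
    have h2 : 2*δ*ℓ*ε ≤ 4*δ*ℓ*η := by
      rw [hη]
      nlinarith [mul_nonneg (mul_nonneg hδ0 hℓ0) (sub_nonneg.2 hδε)]
    have h4 : 2*δ*(p:ℝ)*ε*η ≤ 4*δ*ℓ*η := by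
      have hm := mul_le_mul_of_nonneg_right h1 hε.le
      calc 2*δ*(p:ℝ)*ε*η = 2*δ*((p:ℝ)*η)*ε := by ring
      _ ≤ 2*δ*ℓ*ε := hm
      _ ≤ 4*δ*ℓ*η := h2
    have h5 : 2*δ*(p:ℝ)*ε ≤ 4*δ*ℓ := le_of_mul_le_mul_right (by linarith) hη0
    have h3 : 2*δ*(p:ℝ) ≤ 4*(δ/ε)*ℓ := by
      calc 2*δ*(p:ℝ) ≤ 4*δ*ℓ/ε := (le_div_iff₀ hε).2 (by linarith)
      _ = 4*(δ/ε)*ℓ := by ring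
    linarith
  refine ⟨p+1, w, hw0, hwlast, ?_, fun i hi => hedge i hi, hsum.trans hfinal⟩
  intro i hi
  rcases Nat.eq_zero_or_pos i with h0 | h0
  · subst h0; rw [hw0]; right; left; rfl
  by_cases h : i ≤ p
  · left
    simp only [hwdef, if_neg (Nat.pos_iff_ne_zero.1 h0), if_pos h]
    exact hzV i
  · have hip : i = p + 1 := le_antisymm hi (Nat.succ_le_of_lt (not_le.1 h))
    subst hip
    rw [hwlast]; right; right; rfl

lemma geoDist_path_le {d : ℕ} {M : Set (EuclideanSpace ℝ (Fin d))}
    (hMgeo : GeodesicallyConvex M) (p : ℕ) (w : ℕ → EuclideanSpace ℝ (Fin d))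
    (hw : ∀ i ≤ p, w i ∈ M) :
    geoDist M (w 0) (w p) ≤ ∑ i ∈ Finset.range p, geoDist M (w i) (w (i+1)) := by
  induction p with
  | zero => simp [geoDist_self (hw 0 le_rfl)]
  | succ q ih =>
    have h1 := ih (fun i hi => hw i (hi.trans (Nat.le_succ q)))
    have h2 := geoDist_triangle hMgeo (hw 0 (Nat.zero_le _)) (hw q (Nat.le_succ q))
      (hw (q+1) le_rfl)
    rw [Finset.sum_range_succ]
    linarith

lemma fac_nonneg {r₀ ε : ℝ} (hr₀ : 0 < r₀) (hε0 : 0 ≤ ε) (hε2 : ε < 2*r₀) :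
    0 ≤ 1 - 1/24 * (π * ε / (2*r₀))^2 := by
  have h2r : (0:ℝ) < 2*r₀ := by linarith
  have h : ε/(2*r₀) ≤ 1 := by rw [div_le_one h2r]; linarith
  have h0 : 0 ≤ ε/(2*r₀) := div_nonneg hε0 h2r.le
  have heq : (π * ε / (2*r₀))^2 = π^2 * (ε/(2*r₀))^2 := by ring
  rw [heq]
  have hx2 : (ε/(2*r₀))^2 ≤ 1 := by nlinarith
  have hπ2 : π^2 ≤ 24 := by nlinarith [pi_lt_d2, pi_pos]
  have hm := mul_le_mul hπ2 hx2 (sq_nonneg _) (by norm_num : (0:ℝ) ≤ 24)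
  linarith

lemma edge_geo_bound {d : ℕ} {M : Set (EuclideanSpace ℝ (Fin d))} {r₀ : ℝ} (hr₀ : 0 < r₀)
    (hreach : ∀ a ∈ M, ∀ b ∈ M, ‖a - b‖ < 2 * r₀ →
      geoDist M a b ≤ 2 * r₀ * Real.arcsin (‖a - b‖ / (2 * r₀)))
    {ε : ℝ} (hε2 : ε < 2*r₀) {u v : EuclideanSpace ℝ (Fin d)}
    (hu : u ∈ M) (hv : v ∈ M) (huv : ‖u - v‖ ≤ ε) :
    (1 - 1/24 * (π * ε / (2*r₀))^2) * geoDist M u v ≤ ‖u - v‖ := by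
  have h := hreach u hu v hv (lt_of_le_of_lt huv hε2)
  have h2r : (0:ℝ) < 2*r₀ := by linarith
  have hε0 : 0 ≤ ε := (norm_nonneg _).trans huv
  have hT1 : ε / (2*r₀) ≤ 1 := by rw [div_le_one h2r]; linarith
  have ht0 : 0 ≤ ‖u - v‖ / (2*r₀) := div_nonneg (norm_nonneg _) h2r.le
  have htT : ‖u - v‖ / (2*r₀) ≤ ε / (2*r₀) := by
    apply div_le_div_of_nonneg_right huv h2r.le
  have key := arcsin_key hT1 ht0 htT
  have hc : 1/24 * (π * ε / (2*r₀))^2 = π^2/24 * (ε/(2*r₀))^2 := by ring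
  have hfac := fac_nonneg hr₀ hε0 hε2
  rw [hc] at hfac ⊢
  have key2 : (1 - π^2/24 * (ε/(2*r₀))^2) * (2*r₀ * Real.arcsin (‖u - v‖/(2*r₀))) ≤
      ‖u - v‖ := by
    have hm := mul_le_mul_of_nonneg_left key h2r.le
    calc (1 - π^2/24 * (ε/(2*r₀))^2) * (2*r₀ * Real.arcsin (‖u - v‖/(2*r₀)))
        = 2*r₀ * ((1 - π^2/24 * (ε/(2*r₀))^2) * Real.arcsin (‖u - v‖/(2*r₀))) := by ring
    _ ≤ 2*r₀ * (‖u - v‖/(2*r₀)) := hm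
    _ = ‖u - v‖ := by field_simp
  calc (1 - π^2/24 * (ε/(2*r₀))^2) * geoDist M u v
      ≤ (1 - π^2/24 * (ε/(2*r₀))^2) * (2*r₀ * Real.arcsin (‖u - v‖/(2*r₀))) :=
        mul_le_mul_of_nonneg_left h hfac
  _ ≤ ‖u - v‖ := key2

end AuxLemmas

/-- Graph distance over paths through `V` with edges given by `Edge`:
the infimum of total Euclidean edge lengths over paths joining `x` to `y`. -/
noncomputable def graphDistRel {d : ℕ} (V : Set (EuclideanSpace ℝ (Fin d)))
    (Edge : EuclideanSpace ℝ (Fin d) → EuclideanSpace ℝ (Fin d) → Prop)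
    (x y : EuclideanSpace ℝ (Fin d)) : ℝ :=
  sInf {L : ℝ | ∃ (p : ℕ) (w : ℕ → EuclideanSpace ℝ (Fin d)),
    w 0 = x ∧ w p = y ∧ (∀ i ≤ p, w i ∈ V) ∧ (∀ i < p, Edge (w i) (w (i + 1))) ∧
    L = ∑ i ∈ Finset.range p, ‖w (i + 1) - w i‖}

/-- Graph distance for the ε-neighborhood graph on vertex set `V`. -/
noncomputable def graphDist {d : ℕ} (V : Set (EuclideanSpace ℝ (Fin d))) (ε : ℝ)
    (x y : EuclideanSpace ℝ (Fin d)) : ℝ :=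
  graphDistRel V (fun u v => ‖u - v‖ ≤ ε) x y

/-- Theorem 1 of the paper: the ε-neighborhood graph distance approximates the
geodesic distance, for a compact geodesically convex set with positive reach. -/
theorem graph_approx_theorem {d : ℕ} (M : Set (EuclideanSpace ℝ (Fin d)))
    (hMcomp : IsCompact M) (hMgeo : GeodesicallyConvex M)
    (r₀ : ℝ) (hr₀ : 0 < r₀)
    (hreach : ∀ a ∈ M, ∀ b ∈ M, ‖a - b‖ < 2 * r₀ →
      geoDist M a b ≤ 2 * r₀ * Real.arcsin (‖a - b‖ / (2 * r₀)))
    (Xn : ℕ → Set (EuclideanSpace ℝ (Fin d)))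
    (hXnM : ∀ n, Xn n ⊆ M) (hXnfin : ∀ n, (Xn n).Finite)
    (hXnne : ∀ n, (Xn n).Nonempty)
    (ε : ℕ → ℝ) (hεpos : ∀ n, 0 < ε n)
    (hε0 : Tendsto ε atTop (nhds 0))
    (hτ0 : Tendsto (fun n => Metric.hausdorffDist (Xn n) M / ε n) atTop (nhds 0)) :
    ∀ᶠ n in atTop, ε n < 2 * r₀ ∧ ∀ x ∈ M, ∀ y ∈ M,
      (1 - (1 / 24) * (Real.pi * ε n / (2 * r₀)) ^ 2) * geoDist M x y ≤
          graphDist (Xn n ∪ {x, y}) (ε n) x y ∧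
        graphDist (Xn n ∪ {x, y}) (ε n) x y ≤
          (1 + 4 * (Metric.hausdorffDist (Xn n) M / ε n)) * geoDist M x y := by
  have h1 : ∀ᶠ n in atTop, ε n < 2 * r₀ := hε0.eventually_lt_const (by linarith)
  have h2 : ∀ᶠ n in atTop, Metric.hausdorffDist (Xn n) M / ε n < 1/4 :=
    hτ0.eventually_lt_const (by norm_num)
  filter_upwards [h1, h2] with n hn1 hn2
  refine ⟨hn1, ?_⟩
  intro x hx y hy
  have hδ0 : 0 ≤ Metric.hausdorffDist (Xn n) M := hausdorffDist_nonneg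
  have hτ : 4 * Metric.hausdorffDist (Xn n) M ≤ ε n := by
    rw [div_lt_iff₀ (hεpos n)] at hn2
    linarith
  have hsample : ∀ a ∈ M, ∃ z ∈ Xn n, ‖z - a‖ ≤ Metric.hausdorffDist (Xn n) M := by
    intro a ha
    have hedist : hausdorffEDist M (Xn n) ≠ ⊤ := by
      rw [hausdorffEDist_comm]
      exact hausdorffEDist_ne_top_of_nonempty_of_bounded (hXnne n) ⟨a, ha⟩
        ((hXnfin n).isBounded) hMcomp.isBounded
    have hinf : infDist a (Xn n) ≤ Metric.hausdorffDist (Xn n) M := by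
      rw [hausdorffDist_comm]
      exact infDist_le_hausdorffDist_of_mem ha hedist
    obtain ⟨z, hz, hdz⟩ := ((hXnfin n).isCompact).exists_infDist_eq_dist (hXnne n) a
    refine ⟨z, hz, ?_⟩
    rw [show ‖z - a‖ = dist a z by rw [dist_comm, dist_eq_norm]]
    rw [← hdz]
    exact hinf
  obtain ⟨p₀, w₀, hw0, hwp, hwV, hedge, hlen⟩ :=
    upper_bound_aux hMgeo hx hy (hεpos n) hδ0 hτ hsample
  have hmem : (∑ i ∈ Finset.range p₀, ‖w₀ (i+1) - w₀ i‖) ∈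
      {L : ℝ | ∃ (p : ℕ) (w : ℕ → EuclideanSpace ℝ (Fin d)),
        w 0 = x ∧ w p = y ∧ (∀ i ≤ p, w i ∈ Xn n ∪ {x, y}) ∧
        (∀ i < p, ‖w i - w (i + 1)‖ ≤ ε n) ∧
        L = ∑ i ∈ Finset.range p, ‖w (i + 1) - w i‖} :=
    ⟨p₀, w₀, hw0, hwp, hwV, hedge, rfl⟩
  have hbdd : BddBelow {L : ℝ | ∃ (p : ℕ) (w : ℕ → EuclideanSpace ℝ (Fin d)),
      w 0 = x ∧ w p = y ∧ (∀ i ≤ p, w i ∈ Xn n ∪ {x, y}) ∧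
      (∀ i < p, ‖w i - w (i + 1)‖ ≤ ε n) ∧
      L = ∑ i ∈ Finset.range p, ‖w (i + 1) - w i‖} := by
    refine ⟨0, fun L hL => ?_⟩
    obtain ⟨p, w, _, _, _, _, rfl⟩ := hL
    exact Finset.sum_nonneg fun i _ => norm_nonneg _
  constructor
  · -- lower bound
    rw [graphDist, graphDistRel]
    apply le_csInf ⟨_, hmem⟩
    rintro L ⟨p, w, hw0', hwp', hwV', hedge', rfl⟩
    have hwM : ∀ i ≤ p, w i ∈ M := by
      intro i hi
      rcases hwV' i hi with h | h
      · exact hXnM n h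
      · rcases h with h | h
        · rw [h]; exact hx
        · rw [h]; exact hy
    have hgeo_le : geoDist M x y ≤ ∑ i ∈ Finset.range p, geoDist M (w i) (w (i+1)) := by
      have := geoDist_path_le hMgeo p w hwM
      rwa [hw0', hwp'] at this
    have hfac := fac_nonneg hr₀ (hεpos n).le hn1
    calc (1 - 1/24 * (Real.pi * ε n / (2*r₀))^2) * geoDist M x y
        ≤ (1 - 1/24 * (Real.pi * ε n / (2*r₀))^2) *
          ∑ i ∈ Finset.range p, geoDist M (w i) (w (i+1)) :=
          mul_le_mul_of_nonneg_left hgeo_le hfac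
    _ = ∑ i ∈ Finset.range p, (1 - 1/24 * (Real.pi * ε n / (2*r₀))^2) * geoDist M (w i) (w (i+1)) :=
        Finset.mul_sum _ _ _
    _ ≤ ∑ i ∈ Finset.range p, ‖w (i+1) - w i‖ := by
        apply Finset.sum_le_sum
        intro i hi
        have hii := Finset.mem_range.1 hi
        have hb := edge_geo_bound hr₀ hreach hn1 (hwM i hii.le) (hwM (i+1) hii)
          (hedge' i hii)
        rwa [norm_sub_rev] at hb
  · -- upper bound
    rw [graphDist, graphDistRel]
    exact (csInf_le hbdd hmem).trans hlen
end

section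
/- Let $X_1, X_2, \ldots$ be iid observations from a distribution $P_X$ on $\mathbb{R}^d$ whose support $M$ is compact and standard with respect to $P_X$ with standardness constant $\eta$. Then with probability one, for $n$ large enough, $d_H(\{X_1,\ldots,X_n\}, M) \le c (\log n / n)^{1/d}$ for any constant $c > (2/(\eta \omega_d))^{1/d}$, where $\omega_d$ is the volume of the unit ball in $\mathbb{R}^d$. -/
open MeasureTheory ProbabilityTheory Filter Metric

lemma exists_net {E : Type*} [MetricSpace E] [MeasurableSpace E] [OpensMeasurableSpace E]
    (μ : Measure E) [IsProbabilityMeasure μ]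
    (M : Set E) (hM : IsClosed M) (δ : ℝ) (hδ : 0 < δ) (q : ENNReal)
    (hq : 0 < q) (hqtop : q ≠ ⊤)
    (hlow : ∀ y ∈ M, q ≤ μ (closedBall y (δ/3) ∩ M)) :
    ∃ t : Finset E, ↑t ⊆ M ∧ (∀ x ∈ M, ∃ y ∈ t, dist x y ≤ δ) ∧
      (t.card : ENNReal) * q ≤ 1 := by
  classical
  set P : Finset E → Prop := fun t => ↑t ⊆ M ∧ ∀ y ∈ t, ∀ z ∈ t, y ≠ z → δ ≤ dist y z with hP
  have cardbound : ∀ t : Finset E, P t → (t.card : ENNReal) * q ≤ 1 := by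
    intro t ht
    have hdisj : (↑t : Set E).PairwiseDisjoint (fun y => closedBall y (δ/3) ∩ M) := by
      intro y hy z hz hyz
      refine Set.disjoint_left.2 fun w hw hw' => ?_
      have h1 : dist w y ≤ δ/3 := hw.1
      have h2 : dist w z ≤ δ/3 := hw'.1
      have h3 : δ ≤ dist y z := ht.2 y hy z hz hyz
      have hyz' : dist y z ≤ δ/3 + δ/3 := by
        calc dist y z ≤ dist y w + dist w z := dist_triangle _ _ _
        _ ≤ δ/3 + δ/3 := by rw [dist_comm y w]; exact add_le_add h1 h2
      linarith
    have hmeas : ∀ y ∈ t, MeasurableSet (closedBall y (δ/3) ∩ M) := fun y _ =>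
      measurableSet_closedBall.inter hM.measurableSet
    have heq := measure_biUnion_finset hdisj hmeas (μ := μ)
    have hsum : t.card • q ≤ ∑ y ∈ t, μ (closedBall y (δ/3) ∩ M) :=
      Finset.card_nsmul_le_sum t _ q fun y hy => hlow y (ht.1 hy)
    rw [nsmul_eq_mul] at hsum
    calc (t.card : ENNReal) * q ≤ ∑ y ∈ t, μ (closedBall y (δ/3) ∩ M) := hsum
      _ = μ (⋃ y ∈ t, closedBall y (δ/3) ∩ M) := heq.symm
      _ ≤ 1 := prob_le_one
  have hqr : 0 < q.toReal := ENNReal.toReal_pos hq.ne' hqtop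
  have natbound : ∀ t : Finset E, P t → t.card ≤ ⌈1 / q.toReal⌉₊ := by
    intro t ht
    have h1 := cardbound t ht
    have h2 : ((t.card : ENNReal) * q).toReal ≤ 1 := by
      have := ENNReal.toReal_mono (by norm_num) h1
      simpa using this
    rw [ENNReal.toReal_mul] at h2
    simp only [ENNReal.toReal_natCast] at h2
    have h3 : (t.card : ℝ) ≤ 1 / q.toReal := by
      rw [le_div_iff₀ hqr]; exact h2
    exact_mod_cast h3.trans (Nat.le_ceil _)
  set C : Set ℕ := {n | ∃ t : Finset E, P t ∧ t.card = n} with hC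
  have hCne : C.Nonempty := ⟨0, ∅, ⟨by simp, by simp⟩, rfl⟩
  have hCbdd : BddAbove C := ⟨⌈1 / q.toReal⌉₊, fun n ⟨t, ht, hcard⟩ => hcard ▸ natbound t ht⟩
  obtain ⟨t, ht, hcard⟩ := Nat.sSup_mem hCne hCbdd
  refine ⟨t, ht.1, ?_, cardbound t ht⟩
  intro x hx
  by_contra hcon
  push_neg at hcon
  have hxt : x ∉ t := fun hxt => by have := hcon x hxt; simp at this; linarith
  have hP' : P (insert x t) := by
    constructor
    · rw [Finset.coe_insert]; exact Set.insert_subset hx ht.1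
    · intro y hy z hz hyz
      rcases Finset.mem_insert.1 hy with hy' | hy'
      · rcases Finset.mem_insert.1 hz with hz' | hz'
        · exact absurd (hy'.trans hz'.symm) hyz
        · rw [hy']; exact (hcon z hz').le
      · rcases Finset.mem_insert.1 hz with hz' | hz'
        · rw [hz', dist_comm]; exact (hcon y hy').le
        · exact ht.2 y hy' z hz' hyz
  have : (insert x t).card ∈ C := ⟨_, hP', rfl⟩
  have hle := le_csSup hCbdd this
  rw [Finset.card_insert_of_notMem hxt, hcard] at hle
  omega


/-- Theorem 3 of Cuevas–Rodríguez-Casal: rate of convergence of the Hausdorff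
distance between an iid sample and its compact standard support. -/
theorem hausdorff_rate {d : ℕ} (hd : 0 < d)
    {Ω : Type*} [MeasureSpace Ω] [IsProbabilityMeasure (ℙ : Measure Ω)]
    (X : ℕ → Ω → EuclideanSpace ℝ (Fin d)) (hmeas : ∀ i, Measurable (X i))
    (hindep : ProbabilityTheory.iIndepFun X ℙ)
    (μ : Measure (EuclideanSpace ℝ (Fin d))) [IsProbabilityMeasure μ]
    (hid : ∀ i, Measure.map (X i) ℙ = μ)
    (M : Set (EuclideanSpace ℝ (Fin d))) (hMcomp : IsCompact M)
    (hMne : M.Nonempty) (hμM : μ M = 1) (hXM : ∀ i, ∀ᵐ ω, X i ω ∈ M)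
    (η lam : ℝ) (hη : 0 < η) (hlam : 0 < lam)
    (hstd : ∀ x ∈ M, ∀ ε : ℝ, 0 < ε → ε ≤ lam →
      ENNReal.ofReal η * volume (Metric.closedBall x ε) ≤
        μ (Metric.closedBall x ε ∩ M))
    (c : ℝ)
    (hc : (2 / (η * (volume (Metric.ball (0 : EuclideanSpace ℝ (Fin d)) 1)).toReal))
        ^ (1 / (d : ℝ)) < c) :
    ∀ᵐ ω, ∀ᶠ n : ℕ in atTop,
      Metric.hausdorffDist ((fun i => X i ω) '' {i | i < n}) M ≤
        c * (Real.log n / n) ^ (1 / (d : ℝ)) := by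
  classical
  have hd' : (d : ℝ) ≠ 0 := Nat.cast_ne_zero.2 hd.ne'
  set vB : ENNReal := volume (Metric.ball (0 : EuclideanSpace ℝ (Fin d)) 1) with hvB
  have hvBtop : vB ≠ ⊤ := measure_ball_lt_top.ne
  have hvBpos : 0 < vB := measure_ball_pos volume 0 one_pos
  set ωd : ℝ := vB.toReal with hωd
  have hωdpos : 0 < ωd := ENNReal.toReal_pos hvBpos.ne' hvBtop
  have hvB' : vB = ENNReal.ofReal ωd := (ENNReal.ofReal_toReal hvBtop).symm
  have hA : 0 < η * ωd := mul_pos hη hωdpos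
  -- basic constants
  have hc0 : 0 < c := lt_of_le_of_lt (Real.rpow_nonneg (by positivity) _) hc
  have ha : 2 < η * ωd * c ^ d := by
    have hb : (0:ℝ) ≤ 2 / (η * ωd) := by positivity
    have h1 : (2 / (η * ωd)) < c ^ d := by
      have h2 : ((2 / (η * ωd)) ^ (1 / (d:ℝ))) ^ d < c ^ d :=
        pow_lt_pow_left₀ hc (Real.rpow_nonneg hb _) hd.ne'
      rwa [← Real.rpow_natCast ((2 / (η * ωd)) ^ (1 / (d:ℝ))) d, ← Real.rpow_mul hb,
        one_div, inv_mul_cancel₀ hd', Real.rpow_one] at h2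
    calc (2:ℝ) = (2 / (η * ωd)) * (η * ωd) := by field_simp
    _ < c ^ d * (η * ωd) := by exact mul_lt_mul_of_pos_right h1 hA
    _ = η * ωd * c ^ d := by ring
  set a : ℝ := η * ωd * c ^ d with haa
  set κ : ℝ := (a + 2) / 2 with hκdef
  have hκ2 : 2 < κ := by simp only [hκdef]; linarith
  have hκa : κ < a := by simp only [hκdef]; linarith
  have hκpos : 0 < κ := by linarith
  have hapos : 0 < a := by linarith
  set ρ : ℝ := κ / a with hρdef
  have hρpos : 0 < ρ := div_pos hκpos hapos
  have hρ1 : ρ < 1 := (div_lt_one hapos).2 hκa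
  set s : ℝ := ρ ^ (1 / (d:ℝ)) with hsdef
  have hspos : 0 < s := Real.rpow_pos_of_pos hρpos _
  have hs1 : s < 1 := Real.rpow_lt_one hρpos.le hρ1 (by positivity)
  have hsd : s ^ d = ρ := by
    rw [hsdef, ← Real.rpow_natCast (ρ ^ (1 / (d:ℝ))) d, ← Real.rpow_mul hρpos.le,
      one_div, inv_mul_cancel₀ hd', Real.rpow_one]
  -- the scales
  set L : ℕ → ℝ := fun n => Real.log n / n with hL
  set ε : ℕ → ℝ := fun n => c * (L n) ^ (1 / (d:ℝ)) with hε
  set r : ℕ → ℝ := fun n => s * ε n with hr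
  set δ : ℕ → ℝ := fun n => (1 - s) * ε n with hδ
  set w : ℕ → ℝ := fun n => κ * L n with hw
  set C0 : ℝ := 3 ^ d / (η * ωd * (1 - s) ^ d * c ^ d) with hC0
  have hC0pos : 0 < C0 := by
    apply div_pos (by positivity)
    have : (0:ℝ) < 1 - s := by linarith
    positivity
  -- limits
  have hLto : Tendsto L atTop (nhds 0) :=
    (Real.isLittleO_log_id_atTop.tendsto_div_nhds_zero).comp tendsto_natCast_atTop_atTop
  have h1d : (0:ℝ) < 1 / (d:ℝ) := div_pos one_pos (by exact_mod_cast hd)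
  have hεto : Tendsto ε atTop (nhds 0) := by
    have hcont : ContinuousAt (fun x : ℝ => c * x ^ (1 / (d:ℝ))) 0 := by
      apply ContinuousAt.mul continuousAt_const
      exact Real.continuousAt_rpow_const 0 _ (Or.inr h1d.le)
    have h0 : c * (0:ℝ) ^ (1/(d:ℝ)) = 0 := by
      rw [Real.zero_rpow h1d.ne', mul_zero]
    have := hcont.tendsto.comp hLto
    rw [h0] at this
    exact this
  have hwto : Tendsto w atTop (nhds 0) := by
    simpa using hLto.const_mul κ
  have hev : ∀ᶠ n : ℕ in atTop, 3 ≤ n ∧ ε n < lam ∧ w n < 1 :=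
    (eventually_ge_atTop 3).and ((hεto.eventually_lt_const hlam).and
      (hwto.eventually_lt_const one_pos))
  obtain ⟨N0, hN0⟩ := eventually_atTop.1 hev
  -- basic facts for n ≥ N0
  have hnpos : ∀ n : ℕ, N0 ≤ n → (0:ℝ) < n := by
    intro n hn
    have h3 := (hN0 n hn).1
    exact_mod_cast Nat.lt_of_lt_of_le (by norm_num) h3
  have hlog1 : ∀ n : ℕ, N0 ≤ n → 1 ≤ Real.log n := by
    intro n hn
    have h3 := (hN0 n hn).1
    have he : Real.exp 1 ≤ (n:ℝ) := by
      have h9 := Real.exp_one_lt_d9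
      have : (3:ℝ) ≤ n := by exact_mod_cast h3
      linarith
    calc (1:ℝ) = Real.log (Real.exp 1) := (Real.log_exp 1).symm
    _ ≤ Real.log n := Real.log_le_log (Real.exp_pos 1) he
  have hLpos : ∀ n : ℕ, N0 ≤ n → 0 < L n := fun n hn =>
    div_pos (lt_of_lt_of_le one_pos (hlog1 n hn)) (hnpos n hn)
  have hεpos : ∀ n : ℕ, N0 ≤ n → 0 < ε n := fun n hn =>
    mul_pos hc0 (Real.rpow_pos_of_pos (hLpos n hn) _)
  have hrpos : ∀ n : ℕ, N0 ≤ n → 0 < r n := fun n hn => mul_pos hspos (hεpos n hn)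
  have hδpos : ∀ n : ℕ, N0 ≤ n → 0 < δ n := fun n hn =>
    mul_pos (by linarith) (hεpos n hn)
  have hrlam : ∀ n : ℕ, N0 ≤ n → r n ≤ lam := by
    intro n hn
    have h1 := (hN0 n hn).2.1
    have h2 := hεpos n hn
    have : r n ≤ ε n := by
      calc r n = s * ε n := rfl
      _ ≤ 1 * ε n := mul_le_mul_of_nonneg_right hs1.le h2.le
      _ = ε n := one_mul _
    linarith
  have hδlam : ∀ n : ℕ, N0 ≤ n → δ n / 3 ≤ lam := by
    intro n hn
    have h1 := (hN0 n hn).2.1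
    have h2 := hεpos n hn
    have : δ n ≤ ε n := by
      calc δ n = (1 - s) * ε n := rfl
      _ ≤ 1 * ε n := mul_le_mul_of_nonneg_right (by linarith) h2.le
      _ = ε n := one_mul _
    linarith
  have hLd : ∀ n : ℕ, N0 ≤ n → ((L n) ^ (1/(d:ℝ))) ^ d = L n := by
    intro n hn
    rw [← Real.rpow_natCast ((L n) ^ (1/(d:ℝ))) d, ← Real.rpow_mul (hLpos n hn).le,
      one_div, inv_mul_cancel₀ hd', Real.rpow_one]
  have hεd : ∀ n : ℕ, N0 ≤ n → (ε n) ^ d = c ^ d * L n := by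
    intro n hn
    calc (ε n) ^ d = c ^ d * ((L n) ^ (1/(d:ℝ))) ^ d := mul_pow c _ d
    _ = c ^ d * L n := by rw [hLd n hn]
  have hwn : ∀ n : ℕ, N0 ≤ n → η * ωd * (r n) ^ d = w n := by
    intro n hn
    have : (r n) ^ d = s ^ d * (ε n) ^ d := mul_pow s _ d
    rw [hw]
    calc η * ωd * (r n) ^ d = η * ωd * (s ^ d * (ε n) ^ d) := by rw [this]
    _ = η * ωd * (ρ * (c ^ d * L n)) := by rw [hsd, hεd n hn]
    _ = a * ρ * L n := by rw [haa]; ring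
    _ = κ * L n := by rw [hρdef]; field_simp
  have hδd : ∀ n : ℕ, N0 ≤ n → η * ωd * (δ n / 3) ^ d = L n / C0 := by
    intro n hn
    have h1 : (δ n / 3) ^ d = (1 - s) ^ d * (ε n) ^ d / 3 ^ d := by
      rw [div_pow, mul_pow]
    have h1s : (0:ℝ) < 1 - s := by linarith
    rw [h1, hεd n hn, hC0]
    have h3 : (0:ℝ) < 3 ^ d := by positivity
    field_simp
  -- volume formula
  have hvol : ∀ (y : EuclideanSpace ℝ (Fin d)) (rad : ℝ), 0 ≤ rad →
      ENNReal.ofReal (η * ωd * rad ^ d) = ENNReal.ofReal η * volume (closedBall y rad) := by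
    intro y rad hrad
    rw [Measure.addHaar_closedBall volume y hrad, finrank_euclideanSpace_fin, ← hvB, hvB',
      ← ENNReal.ofReal_mul (pow_nonneg hrad d), ← ENNReal.ofReal_mul hη.le]
    congr 1
    ring
  -- the nets
  have hnets : ∀ n : ℕ, ∃ t : Finset (EuclideanSpace ℝ (Fin d)), N0 ≤ n → (↑t ⊆ M ∧
      (∀ x ∈ M, ∃ y ∈ t, dist x y ≤ δ n) ∧ ((t.card : ℝ) ≤ C0 * n)) := by
    intro n
    by_cases hn : N0 ≤ n
    · have hLC : 0 < L n / C0 := div_pos (hLpos n hn) hC0pos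
      have hlow : ∀ y ∈ M, ENNReal.ofReal (L n / C0) ≤ μ (closedBall y (δ n / 3) ∩ M) := by
        intro y hy
        have hrad : 0 < δ n / 3 := by have := hδpos n hn; linarith
        calc ENNReal.ofReal (L n / C0) = ENNReal.ofReal (η * ωd * (δ n / 3) ^ d) := by
              rw [hδd n hn]
        _ = ENNReal.ofReal η * volume (closedBall y (δ n / 3)) := hvol y _ hrad.le
        _ ≤ μ (closedBall y (δ n / 3) ∩ M) := hstd y hy _ hrad (hδlam n hn)
      obtain ⟨t, ht1, ht2, ht3⟩ := exists_net μ M hMcomp.isClosed (δ n) (hδpos n hn)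
        (ENNReal.ofReal (L n / C0)) (ENNReal.ofReal_pos.2 hLC) ENNReal.ofReal_ne_top hlow
      refine ⟨t, fun _ => ⟨ht1, ht2, ?_⟩⟩
      have h2 : ((t.card : ENNReal) * ENNReal.ofReal (L n / C0)).toReal ≤ 1 := by
        have := ENNReal.toReal_mono (by norm_num) ht3
        simpa using this
      rw [ENNReal.toReal_mul, ENNReal.toReal_ofReal hLC.le] at h2
      simp only [ENNReal.toReal_natCast] at h2
      have h3 : (t.card : ℝ) ≤ C0 / L n := by
        rw [le_div_iff₀ (hLpos n hn)]
        calc (t.card : ℝ) * L n = (t.card : ℝ) * (L n / C0) * C0 := by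
              rw [mul_assoc, div_mul_cancel₀ _ hC0pos.ne']
        _ ≤ 1 * C0 := mul_le_mul_of_nonneg_right h2 hC0pos.le
        _ = C0 := one_mul _
      refine h3.trans ?_
      rw [hL, div_div_eq_mul_div]
      have h4 : (n:ℝ) / Real.log n ≤ n := by
        apply div_le_self (hnpos n hn).le (hlog1 n hn)
      calc C0 * (n:ℝ) / Real.log n = C0 * ((n:ℝ) / Real.log n) := by ring
      _ ≤ C0 * n := mul_le_mul_of_nonneg_left h4 hC0pos.le
    · exact ⟨∅, fun h => absurd h hn⟩
  choose T hT using hnets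
  -- bad events
  set Bad : ℕ → Set Ω := fun n => if N0 ≤ n then
      ⋃ y ∈ T n, ⋂ i ∈ Finset.range n, X i ⁻¹' (closedBall y (r n))ᶜ else ∅ with hBad
  have hprob : ∀ n : ℕ, ℙ (Bad n) ≤ ENNReal.ofReal (C0 * (n:ℝ) ^ ((1:ℝ) - κ)) := by
    intro n
    by_cases hn : N0 ≤ n
    · have hwpos : 0 < w n := mul_pos hκpos (hLpos n hn)
      have hw1 : w n < 1 := (hN0 n hn).2.2
      have hBn : Bad n = ⋃ y ∈ T n, ⋂ i ∈ Finset.range n, X i ⁻¹' (closedBall y (r n))ᶜ := by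
        rw [hBad]; simp only [if_pos hn]
      rw [hBn]
      refine le_trans (measure_biUnion_finset_le _ _) ?_
      have hmiss : ∀ y ∈ T n, ℙ (⋂ i ∈ Finset.range n, X i ⁻¹' (closedBall y (r n))ᶜ) ≤
          ENNReal.ofReal ((1 - w n) ^ n) := by
        intro y hy
        have hyM : y ∈ M := (hT n hn).1 hy
        rw [hindep.measure_inter_preimage_eq_mul (Finset.range n)
          (fun i _ => measurableSet_closedBall.compl)]
        have hfac : ∀ i : ℕ, ℙ (X i ⁻¹' (closedBall y (r n))ᶜ) ≤ ENNReal.ofReal (1 - w n) := by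
          intro i
          have h1 : ℙ (X i ⁻¹' (closedBall y (r n))ᶜ) = μ (closedBall y (r n))ᶜ := by
            rw [← hid i, Measure.map_apply (hmeas i) measurableSet_closedBall.compl]
          rw [h1, measure_compl measurableSet_closedBall (measure_ne_top μ _)]
          have h2 : ENNReal.ofReal (w n) ≤ μ (closedBall y (r n)) := by
            calc ENNReal.ofReal (w n) = ENNReal.ofReal (η * ωd * (r n) ^ d) := by rw [hwn n hn]
            _ = ENNReal.ofReal η * volume (closedBall y (r n)) := hvol y _ (hrpos n hn).le
            _ ≤ μ (closedBall y (r n) ∩ M) := hstd y hyM _ (hrpos n hn) (hrlam n hn)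
            _ ≤ μ (closedBall y (r n)) := measure_mono Set.inter_subset_left
          calc μ Set.univ - μ (closedBall y (r n)) ≤ 1 - ENNReal.ofReal (w n) := by
                rw [measure_univ]
                exact tsub_le_tsub le_rfl h2
          _ = ENNReal.ofReal (1 - w n) := by
                rw [← ENNReal.ofReal_one, ← ENNReal.ofReal_sub _ hwpos.le]
        calc ∏ i ∈ Finset.range n, ℙ (X i ⁻¹' (closedBall y (r n))ᶜ)
            ≤ ∏ _i ∈ Finset.range n, ENNReal.ofReal (1 - w n) :=
              Finset.prod_le_prod' fun i _ => hfac i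
        _ = ENNReal.ofReal (1 - w n) ^ n := by rw [Finset.prod_const, Finset.card_range]
        _ = ENNReal.ofReal ((1 - w n) ^ n) := (ENNReal.ofReal_pow (by linarith) n).symm
      have hreal : ((T n).card : ℝ) * (1 - w n) ^ n ≤ C0 * (n:ℝ) ^ ((1:ℝ) - κ) := by
        have hnr : (0:ℝ) < n := hnpos n hn
        have hexp : (1 - w n) ^ n ≤ (n:ℝ) ^ (-κ) := by
          have e1 : 1 - w n ≤ Real.exp (-(w n)) := by
            have := Real.add_one_le_exp (-(w n)); linarith
          have e2 : (1 - w n) ^ n ≤ Real.exp (-(w n)) ^ n :=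
            pow_le_pow_left₀ (by linarith) e1 n
          have e3 : Real.exp (-(w n)) ^ n = Real.exp (-κ * Real.log n) := by
            rw [← Real.exp_nat_mul]
            congr 1
            have hn0 : (n:ℝ) ≠ 0 := hnr.ne'
            simp only [hw, hL]
            field_simp
          have e4 : (n:ℝ) ^ (-κ) = Real.exp (-κ * Real.log n) := by rw [Real.rpow_def_of_pos hnr, mul_comm]
          rw [e4, ← e3]
          exact e2
        have hcard : ((T n).card : ℝ) ≤ C0 * n := (hT n hn).2.2
        calc ((T n).card : ℝ) * (1 - w n) ^ n ≤ (C0 * n) * (n:ℝ) ^ (-κ) :=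
              mul_le_mul hcard hexp (pow_nonneg (by linarith) n) (by positivity)
        _ = C0 * ((n:ℝ) ^ (1:ℝ) * (n:ℝ) ^ (-κ)) := by rw [Real.rpow_one]; ring
        _ = C0 * (n:ℝ) ^ ((1:ℝ) - κ) := by
              rw [← Real.rpow_add hnr, sub_eq_add_neg]
      calc ∑ y ∈ T n, ℙ (⋂ i ∈ Finset.range n, X i ⁻¹' (closedBall y (r n))ᶜ)
          ≤ (T n).card • ENNReal.ofReal ((1 - w n) ^ n) :=
            Finset.sum_le_card_nsmul _ _ _ hmiss
      _ = ((T n).card : ENNReal) * ENNReal.ofReal ((1 - w n) ^ n) := nsmul_eq_mul _ _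
      _ = ENNReal.ofReal (((T n).card : ℝ) * (1 - w n) ^ n) := by
            rw [← ENNReal.ofReal_natCast, ← ENNReal.ofReal_mul (Nat.cast_nonneg _)]
      _ ≤ ENNReal.ofReal (C0 * (n:ℝ) ^ ((1:ℝ) - κ)) := ENNReal.ofReal_le_ofReal hreal
    · have : Bad n = ∅ := by rw [hBad]; simp only [if_neg hn]
      rw [this]
      simp
  -- summability and Borel–Cantelli
  have hsummable : Summable (fun n : ℕ => C0 * (n:ℝ) ^ ((1:ℝ) - κ)) :=
    (Real.summable_nat_rpow.2 (by linarith)).mul_left C0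
  have htsum : (∑' n, ℙ (Bad n)) ≠ ⊤ := by
    refine ne_top_of_le_ne_top ?_ (ENNReal.tsum_le_tsum hprob)
    rw [← ENNReal.ofReal_tsum_of_nonneg
      (fun n => mul_nonneg hC0pos.le (Real.rpow_nonneg (Nat.cast_nonneg n) _)) hsummable]
    exact ENNReal.ofReal_ne_top
  have hBC := MeasureTheory.ae_eventually_notMem htsum
  have hXall : ∀ᵐ ω, ∀ i, X i ω ∈ M := MeasureTheory.ae_all_iff.2 hXM
  filter_upwards [hBC, hXall] with ω hω hωM
  filter_upwards [hω, eventually_ge_atTop N0] with n hnB hn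
  have hεn : ε n = c * (Real.log n / n) ^ (1/(d:ℝ)) := rfl
  have hcov : ∀ y ∈ T n, ∃ i, i < n ∧ X i ω ∈ closedBall y (r n) := by
    intro y hy
    by_contra hcon
    push_neg at hcon
    apply hnB
    have hBn : Bad n = ⋃ y ∈ T n, ⋂ i ∈ Finset.range n, X i ⁻¹' (closedBall y (r n))ᶜ := by
      rw [hBad]; simp only [if_pos hn]
    rw [hBn]
    refine Set.mem_biUnion hy ?_
    refine Set.mem_iInter₂.2 fun i hi => ?_
    exact hcon i (Finset.mem_range.1 hi)
  have hεnn : 0 ≤ ε n := (hεpos n hn).le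
  rw [← hεn]
  refine hausdorffDist_le_of_mem_dist hεnn ?_ ?_
  · rintro p ⟨i, _, rfl⟩
    exact ⟨X i ω, hωM i, by simpa [dist_self] using hεnn⟩
  · intro x hx
    obtain ⟨y, hy, hxy⟩ := (hT n hn).2.1 x hx
    obtain ⟨i, hin, hiy⟩ := hcov y hy
    refine ⟨X i ω, ⟨i, hin, rfl⟩, ?_⟩
    calc dist x (X i ω) ≤ dist x y + dist y (X i ω) := dist_triangle _ _ _
    _ ≤ δ n + r n := add_le_add hxy (by rw [dist_comm]; exact hiy)
    _ = ε n := by show (1 - s) * ε n + s * ε n = ε n; ring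
end
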